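/- Let A and B be nonempty subsets of Z/pZ with p prime. Then |A ∔ B| ≥ min{p, |A|+|B|-3}, where A ∔ B = {a+b mod p : a ∈ A, b ∈ B, a ≠ b} (Erdős–Heilbronn problem). -/

import Mathlib

set_option linter.unusedSectionVars false

open Polynomial Finset

namespace EH

variable {K : Type*} [CommRing K]

/-- total-degree bound for an element of K[y][x] -/
def tbnd (f : Polynomial (Polynomial K)) (d : ℕ) : Prop :=
  ∀ i j, d < i + j → (f.coeff i).coeff j = 0

lemma tbnd_zero (d : ℕ) : tbnd (0 : Polynomial (Polynomial K)) d := by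
  intro i j _; simp

lemma tbnd_mono {f : Polynomial (Polynomial K)} {d e : ℕ} (hde : d ≤ e) (h : tbnd f d) :
    tbnd f e := fun i j hij => h i j (lt_of_le_of_lt hde hij)

lemma tbnd_add {f g : Polynomial (Polynomial K)} {d : ℕ} (hf : tbnd f d) (hg : tbnd g d) :
    tbnd (f + g) d := by
  intro i j hij
  simp [Polynomial.coeff_add, hf i j hij, hg i j hij]

lemma tbnd_neg {f : Polynomial (Polynomial K)} {d : ℕ} (hf : tbnd f d) : tbnd (-f) d := by
  intro i j hij
  simp [hf i j hij]

lemma tbnd_sub {f g : Polynomial (Polynomial K)} {d : ℕ} (hf : tbnd f d) (hg : tbnd g d) :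
    tbnd (f - g) d := by
  rw [sub_eq_add_neg]; exact tbnd_add hf (tbnd_neg hg)

lemma tbnd_mul {f g : Polynomial (Polynomial K)} {d e : ℕ} (hf : tbnd f d) (hg : tbnd g e) :
    tbnd (f * g) (d + e) := by
  intro i j hij
  rw [Polynomial.coeff_mul, Polynomial.finset_sum_coeff]
  refine Finset.sum_eq_zero fun x hx => ?_
  rw [Finset.HasAntidiagonal.mem_antidiagonal] at hx
  rw [Polynomial.coeff_mul]
  refine Finset.sum_eq_zero fun y hy => ?_
  rw [Finset.HasAntidiagonal.mem_antidiagonal] at hy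
  rcases Nat.lt_or_ge d (x.1 + y.1) with h1 | h1
  · rw [hf _ _ h1, zero_mul]
  · rw [hg x.2 y.2 (by omega), mul_zero]

lemma tbnd_X : tbnd (X : Polynomial (Polynomial K)) 1 := by
  intro i j hij
  rcases eq_or_ne i 1 with rfl | h
  · rw [Polynomial.coeff_X_one, Polynomial.coeff_one]
    simp only [ite_eq_right_iff]; omega
  · rw [Polynomial.coeff_X, if_neg (by omega)]; simp

lemma tbnd_CX : tbnd (C (X : Polynomial K)) 1 := by
  intro i j hij
  rcases eq_or_ne i 0 with rfl | h
  · rw [Polynomial.coeff_C_zero, Polynomial.coeff_X, if_neg (by omega)]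
  · rw [Polynomial.coeff_C, if_neg h]; simp

lemma tbnd_CC (c : K) (d : ℕ) : tbnd (C (C c) : Polynomial (Polynomial K)) d := by
  intro i j hij
  rcases eq_or_ne i 0 with rfl | h
  · rw [Polynomial.coeff_C_zero, Polynomial.coeff_C, if_neg (by omega)]
  · rw [Polynomial.coeff_C, if_neg h]; simp

lemma tbnd_xy : tbnd ((X : Polynomial (Polynomial K)) + C X) 1 := tbnd_add tbnd_X tbnd_CX

lemma tbnd_pow {f : Polynomial (Polynomial K)} {d : ℕ} (hf : tbnd f d) (n : ℕ) :
    tbnd (f ^ n) (d * n) := by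
  induction n with
  | zero => intro i j hij; simpa using (tbnd_CC (1 : K) 0) i j (by simpa using hij)
  | succ n ih =>
      have := tbnd_mul ih hf
      rw [pow_succ]
      exact tbnd_mono (by ring_nf; omega) this


lemma tbnd_map {g : Polynomial K} {m : ℕ} (hgm : g.natDegree ≤ m) :
    tbnd (g.map (C : K →+* Polynomial K)) m := by
  intro i j hij
  rw [Polynomial.coeff_map]
  rcases Nat.eq_zero_or_pos j with rfl | hj
  · rw [Polynomial.coeff_C_zero]
    exact Polynomial.coeff_eq_zero_of_natDegree_lt (by omega)
  · rw [Polynomial.coeff_C, if_neg (by omega)]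

variable [IsDomain K]

lemma exists_div_mod (g : Polynomial K) (hg : g.Monic) {m d : ℕ} (hm : g.natDegree = m)
    (hm1 : 1 ≤ m) :
    ∀ N (f : Polynomial (Polynomial K)), f.natDegree ≤ N → tbnd f d →
      ∃ q r : Polynomial (Polynomial K),
        f = g.map (C : K →+* Polynomial K) * q + r ∧ r.degree < (m : ℕ) ∧
          (∀ i j, d < i + j + m → (q.coeff i).coeff j = 0) := by
  intro N
  induction N with
  | zero =>
      intro f hfN hf
      refine ⟨0, f, by ring, ?_, by simp⟩
      rcases eq_or_ne f 0 with rfl | hf0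
      · rw [Polynomial.degree_zero]; exact WithBot.bot_lt_coe (m : ℕ)
      · rw [Polynomial.degree_eq_natDegree hf0]
        exact_mod_cast (by omega : f.natDegree < m)
  | succ N ih =>
      intro f hfN hf
      by_cases hf0 : f = 0
      · subst hf0
        exact ⟨0, 0, by ring, by rw [Polynomial.degree_zero]; exact WithBot.bot_lt_coe (m : ℕ),
          by simp⟩
      by_cases hdeg : f.natDegree < m
      · refine ⟨0, f, by ring, ?_, by simp⟩
        rw [Polynomial.degree_eq_natDegree hf0]
        exact_mod_cast hdeg
      push_neg at hdeg
      set e := f.natDegree with he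
      set lc := f.coeff e with hlc
      have hlc0 : lc ≠ 0 := by
        have := Polynomial.leadingCoeff_ne_zero.mpr hf0
        rwa [Polynomial.leadingCoeff] at this
      have hed : e ≤ d := by
        by_contra hcon
        push_neg at hcon
        have h2 : lc.coeff lc.natDegree ≠ 0 := by
          have := Polynomial.leadingCoeff_ne_zero.mpr hlc0
          rwa [Polynomial.leadingCoeff] at this
        exact h2 (hf e lc.natDegree (by omega))
      set G : Polynomial (Polynomial K) := g.map (C : K →+* Polynomial K) with hG
      have hGmonic : G.Monic := hg.map _
      have hGdeg : G.natDegree = m := by rw [hG, hg.natDegree_map, hm]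
      set t : Polynomial (Polynomial K) := C lc * X ^ (e - m) with ht
      have htdeg : t.degree = ((e - m : ℕ) : WithBot ℕ) := Polynomial.degree_C_mul_X_pow _ hlc0
      have hGdeg' : G.degree = (m : WithBot ℕ) := by
        rw [Polynomial.degree_eq_natDegree hGmonic.ne_zero, hGdeg]
      have hGt_deg : (G * t).degree = (e : WithBot ℕ) := by
        rw [Polynomial.degree_mul, htdeg, hGdeg', ← Nat.cast_add]
        congr 1
        omega
      have htlc : t.leadingCoeff = lc := by
        rw [ht, Polynomial.C_mul_X_pow_eq_monomial, Polynomial.leadingCoeff_monomial]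
      have hGt_lc : (G * t).leadingCoeff = lc := by
        rw [Polynomial.leadingCoeff_mul, hGmonic.leadingCoeff, one_mul, htlc]
      set f' : Polynomial (Polynomial K) := f - G * t with hf'
      have hsub : f'.degree < f.degree := by
        refine Polynomial.degree_sub_lt ?_ hf0 ?_
        · rw [hGt_deg, Polynomial.degree_eq_natDegree hf0]
        · rw [Polynomial.leadingCoeff, hGt_lc]
      have hfN' : f'.natDegree ≤ N := by
        rcases eq_or_ne f' 0 with h0 | h0
        · simp [h0]
        · have := Polynomial.natDegree_lt_natDegree h0 hsub
          omega
      have ht_tb : ∀ i j, d < i + j + m → (t.coeff i).coeff j = 0 := by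
        intro i j hij
        rw [ht, Polynomial.C_mul_X_pow_eq_monomial, Polynomial.coeff_monomial]
        by_cases hi : e - m = i
        · rw [if_pos hi]
          exact hf e j (by omega)
        · rw [if_neg hi]; simp
      have hGt_tb : tbnd (G * t) d := by
        have h1 : tbnd G m := tbnd_map (le_of_eq hm)
        have h2 : tbnd t (d - m) := by
          intro i j hij
          exact ht_tb i j (by omega)
        exact tbnd_mono (by omega) (tbnd_mul h1 h2)
      have hf'_tb : tbnd f' d := tbnd_sub hf hGt_tb
      obtain ⟨q', r', hfr', hr'deg, hq'⟩ := ih f' hfN' hf'_tb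
      refine ⟨t + q', r', ?_, hr'deg, ?_⟩
      · have : f = f' + G * t := by rw [hf']; ring
        rw [this, hfr']
        ring
      · intro i j hij
        rw [Polynomial.coeff_add, Polynomial.coeff_add]
        rw [ht_tb i j hij, hq' i j hij, add_zero]

lemma coeff_xy_pow (N i : ℕ) :
    (((X : Polynomial (Polynomial K)) + C X) ^ N).coeff i =
      if i ≤ N then (N.choose i : Polynomial K) * X ^ (N - i) else 0 := by
  rw [add_pow, Polynomial.finset_sum_coeff]
  have hterm : ∀ k, (X : Polynomial (Polynomial K)) ^ k * (C X) ^ (N - k) * (N.choose k : Polynomial (Polynomial K)) = C ((N.choose k : Polynomial K) * X ^ (N - k)) * X ^ k := by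
    intro k
    rw [← Polynomial.C_pow, ← Polynomial.C_eq_natCast, Polynomial.C_mul]
    ring
  calc (∑ k ∈ Finset.range (N + 1), ((X : Polynomial (Polynomial K)) ^ k * (C X) ^ (N - k) * (N.choose k : Polynomial (Polynomial K))).coeff i)
      = ∑ k ∈ Finset.range (N + 1), if i = k then (N.choose k : Polynomial K) * X ^ (N - k) else 0 := by
        refine Finset.sum_congr rfl fun k _ => ?_
        rw [hterm k, Polynomial.C_mul_X_pow_eq_monomial, Polynomial.coeff_monomial]
        simp only [eq_comm]
    _ = _ := by
        rw [Finset.sum_ite_eq (Finset.range (N+1)) i (fun k => (N.choose k : Polynomial K) * X ^ (N - k))]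
        simp only [Finset.mem_range]
        by_cases h : i ≤ N
        · rw [if_pos (by omega), if_pos h]
        · rw [if_neg (by omega), if_neg h]

lemma prod_expand (s : Finset K) (hs : s.Nonempty) :
    ∃ E : Polynomial (Polynomial K),
      (∏ c ∈ s, ((X : Polynomial (Polynomial K)) + C X - C (C c)))
        = ((X : Polynomial (Polynomial K)) + C X) ^ s.card + E ∧ tbnd E (s.card - 1) := by
  induction hs using Finset.Nonempty.cons_induction with
  | singleton c =>
      refine ⟨-C (C c), ?_, ?_⟩
      · simp [sub_eq_add_neg]
      · simpa using tbnd_neg (tbnd_CC c 0)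
  | cons c s hc hs ih =>
      obtain ⟨E, hE, hEb⟩ := ih
      have hcard : (Finset.cons c s hc).card = s.card + 1 := Finset.card_cons hc
      set z : Polynomial (Polynomial K) := X + C X with hz
      refine ⟨z * E - C (C c) * z ^ s.card - C (C c) * E, ?_, ?_⟩
      · rw [Finset.prod_cons, hE, hcard]
        ring
      · rw [hcard]
        have h1 : tbnd (z * E) (1 + (s.card - 1)) := tbnd_mul tbnd_xy hEb
        have h2 : tbnd (C (C c) * z ^ s.card) (0 + 1 * s.card) :=
          tbnd_mul (tbnd_CC c 0) (tbnd_pow tbnd_xy s.card)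
        have h3 : tbnd (C (C c) * E) (0 + (s.card - 1)) := tbnd_mul (tbnd_CC c 0) hEb
        have hs1 : 1 ≤ s.card := Finset.card_pos.mpr hs
        refine tbnd_sub (tbnd_sub (tbnd_mono ?_ h1) (tbnd_mono ?_ h2)) (tbnd_mono ?_ h3) <;> omega


lemma tbnd_prod {ι : Type*} (s : Finset ι) (F : ι → Polynomial (Polynomial K))
    (h : ∀ i ∈ s, tbnd (F i) 1) : tbnd (∏ i ∈ s, F i) s.card := by
  induction s using Finset.cons_induction with
  | empty => intro i j hij; simpa using (tbnd_CC (1 : K) 0) i j (by omega)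
  | cons c s hc ih =>
      rw [Finset.prod_cons, Finset.card_cons]
      exact tbnd_mono (by omega)
        (tbnd_mul (h c (Finset.mem_cons_self c s)) (ih fun i hi => h i (Finset.mem_cons_of_mem hi)))

lemma coeff_sum_C_X (F : ℕ → Polynomial K) (m i : ℕ) :
    ((∑ i' ∈ Finset.range m, C (F i') * X ^ i').coeff i) = if i < m then F i else 0 := by
  rw [Polynomial.finset_sum_coeff]
  calc (∑ i' ∈ Finset.range m, (C (F i') * X ^ i').coeff i)
      = ∑ i' ∈ Finset.range m, if i = i' then F i' else 0 := by
        refine Finset.sum_congr rfl fun i' _ => ?_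
        rw [Polynomial.C_mul_X_pow_eq_monomial, Polynomial.coeff_monomial]
        simp only [eq_comm]
    _ = _ := by
        rw [Finset.sum_ite_eq (Finset.range m) i F]
        simp only [Finset.mem_range]

/-- evaluation at (a, b) -/
noncomputable def ev (a b : K) : Polynomial (Polynomial K) →+* K :=
  (Polynomial.evalRingHom b).comp (Polynomial.evalRingHom (Polynomial.C a))

@[simp] lemma ev_X (a b : K) : ev a b X = a := by
  simp [ev]

@[simp] lemma ev_CX (a b : K) : ev a b (C X) = b := by
  simp [ev]

@[simp] lemma ev_CC (a b c : K) : ev a b (C (C c)) = c := by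
  simp [ev]

@[simp] lemma ev_C (a b : K) (s : Polynomial K) : ev a b (C s) = s.eval b := by
  simp [ev]

lemma eval_map_eval (a b : K) (r : Polynomial (Polynomial K)) :
    (r.map (Polynomial.evalRingHom b)).eval a = ev a b r := by
  induction r using Polynomial.induction_on' with
  | add f g hf hg => simp [hf, hg]
  | monomial n s => simp [ev, Polynomial.eval_monomial]

theorem core (p : ℕ) (hp : p.Prime) (A B : Finset (ZMod p)) (hA : 2 ≤ A.card)
    (hB : 2 ≤ B.card) (hAB : A.card ≠ B.card) (hle : A.card + B.card ≤ p + 2) :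
    A.card + B.card - 2 ≤
      (((A ×ˢ B).filter (fun ab => ab.1 ≠ ab.2)).image (fun ab => ab.1 + ab.2)).card := by
  haveI : Fact p.Prime := ⟨hp⟩
  set S := ((A ×ˢ B).filter (fun ab => ab.1 ≠ ab.2)).image (fun ab => ab.1 + ab.2) with hSdef
  by_contra hcon
  push_neg at hcon
  set m := A.card with hm
  set n := B.card with hn
  set k := m - 1 with hk
  set l := n - 1 with hl
  set N := k + l - 1 with hN
  have hk1 : 1 ≤ k := by omega
  have hl1 : 1 ≤ l := by omega
  have hkl : k + l = m + n - 2 := by omega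
  have hNkl : N + 1 = k + l := by omega
  have hppos : 0 < p := hp.pos
  have hcard_univ : Fintype.card (ZMod p) = p := ZMod.card p
  -- pad S to a set Cs of size exactly N = m + n - 3
  have hScard : S.card ≤ N := by omega
  obtain ⟨Cs, hSC, -, hCcard⟩ := Finset.exists_subsuperset_card_eq (Finset.subset_univ S)
    hScard (by rw [Finset.card_univ, hcard_univ]; omega)
  have hCs_ne : Cs.Nonempty := by
    rw [← Finset.card_pos, hCcard]; omega
  -- the polynomial
  set f : Polynomial (Polynomial (ZMod p)) :=
    (X - C X) * ∏ c ∈ Cs, (X + C X - C (C c)) with hf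
  -- coefficient computation
  have hcoeff : (f.coeff k).coeff l = (N.choose (k-1) : ZMod p) - (N.choose k : ZMod p) := by
    obtain ⟨E, hE, hEb⟩ := prod_expand Cs hCs_ne
    rw [hCcard] at hE hEb
    have hfe : f = X * (X + C X) ^ N - C X * (X + C X) ^ N + (X - C X) * E := by
      rw [hf, hE]; ring
    have h1 : (((X : Polynomial (Polynomial (ZMod p))) * (X + C X) ^ N).coeff k).coeff l
        = (N.choose (k-1) : ZMod p) := by
      have hxk : ((X : Polynomial (Polynomial (ZMod p))) * (X + C X) ^ N).coeff k
          = ((X + C X : Polynomial (Polynomial (ZMod p))) ^ N).coeff (k-1) := by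
        conv_lhs => rw [show k = (k-1)+1 by omega]
        exact Polynomial.coeff_X_mul _ _
      rw [hxk, coeff_xy_pow, if_pos (by omega), show N - (k-1) = l by omega,
        ← Polynomial.C_eq_natCast, Polynomial.C_mul_X_pow_eq_monomial,
        Polynomial.coeff_monomial, if_pos rfl]
    have h2 : ((C (X : Polynomial (ZMod p)) * (X + C X) ^ N).coeff k).coeff l
        = (N.choose k : ZMod p) := by
      rw [Polynomial.coeff_C_mul, coeff_xy_pow, if_pos (by omega)]
      have hXX : (X : Polynomial (ZMod p)) * ((N.choose k : Polynomial (ZMod p)) * X ^ (N - k))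
          = C (N.choose k : ZMod p) * X ^ l := by
        rw [← Polynomial.C_eq_natCast, show l = (N-k)+1 by omega]
        ring
      rw [hXX, Polynomial.C_mul_X_pow_eq_monomial, Polynomial.coeff_monomial, if_pos rfl]
    have h3 : (((X - C X) * E).coeff k).coeff l = 0 := by
      have := tbnd_mul (tbnd_sub tbnd_X tbnd_CX) hEb
      exact this k l (by omega)
    rw [hfe, Polynomial.coeff_add, Polynomial.coeff_sub, Polynomial.coeff_add,
      Polynomial.coeff_sub, h3, add_zero, h1, h2]
  have hcoeff_ne : (f.coeff k).coeff l ≠ 0 := by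
    rw [hcoeff]
    have hNp : N < p := by omega
    have hch : ∀ r, r ≤ N → ¬ (p ∣ N.choose r) := by
      intro r hr hdvd
      have hdvdfact : p ∣ N.factorial := by
        rw [← Nat.choose_mul_factorial_mul_factorial hr]
        exact Dvd.dvd.mul_right (Dvd.dvd.mul_right hdvd _) _
      have := (Nat.Prime.dvd_factorial hp).mp hdvdfact
      omega
    intro h0
    have hsub : (N.choose (k-1) : ZMod p) = (N.choose k : ZMod p) := by
      have := sub_eq_zero.mp h0
      exact this
    have hid : N.choose k * k = N.choose (k-1) * l := by
      have := Nat.choose_succ_right_eq N (k-1)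
      rw [show k - 1 + 1 = k by omega, show N - (k-1) = l by omega] at this
      exact this
    have hcast : (N.choose k : ZMod p) * (k : ZMod p) = (N.choose (k-1) : ZMod p) * (l : ZMod p) := by
      exact_mod_cast congrArg (Nat.cast : ℕ → ZMod p) hid
    rw [← hsub] at hcast
    have hCne : (N.choose (k-1) : ZMod p) ≠ 0 := by
      rw [Ne, ZMod.natCast_eq_zero_iff]
      exact hch (k-1) (by omega)
    have hkl_eq : (k : ZMod p) = (l : ZMod p) := mul_left_cancel₀ hCne hcast
    have : k = l := by
      have h1 := ZMod.val_cast_of_lt (show k < p by omega)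
      have h2 := ZMod.val_cast_of_lt (show l < p by omega)
      rw [← h1, ← h2, hkl_eq]
    omega
  -- vanishing
  have hvanish : ∀ a ∈ A, ∀ b ∈ B, ev a b f = 0 := by
    intro a ha b hb
    have hev : ev a b f = (a - b) * ∏ c ∈ Cs, (a + b - c) := by
      rw [hf, map_mul, map_sub, map_prod, ev_X, ev_CX]
      congr 1
      refine Finset.prod_congr rfl fun c _ => ?_
      rw [map_sub, map_add, ev_X, ev_CX, ev_CC]
    rcases eq_or_ne a b with rfl | hne
    · rw [hev, sub_self, zero_mul]
    · have hmem : a + b ∈ Cs := by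
        refine hSC ?_
        rw [hSdef]
        exact Finset.mem_image.mpr ⟨(a, b),
          Finset.mem_filter.mpr ⟨Finset.mem_product.mpr ⟨ha, hb⟩, hne⟩, rfl⟩
      rw [hev]
      exact mul_eq_zero_of_right _ (Finset.prod_eq_zero hmem (by rw [sub_self]))
  -- division by gA
  set gA : Polynomial (ZMod p) := ∏ a ∈ A, (X - C a) with hgA
  have hgAmonic : gA.Monic :=
    Polynomial.monic_prod_of_monic _ _ (fun a _ => Polynomial.monic_X_sub_C a)
  have hgAdeg : gA.natDegree = m := by
    rw [hgA, Polynomial.natDegree_prod_of_monic _ _ (fun a _ => Polynomial.monic_X_sub_C a)]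
    simp [Polynomial.natDegree_X_sub_C, hm]
  have hftb : tbnd f (k + l) := by
    have h1 : tbnd ((X : Polynomial (Polynomial (ZMod p))) - C X) 1 := tbnd_sub tbnd_X tbnd_CX
    have h2 : tbnd (∏ c ∈ Cs, ((X : Polynomial (Polynomial (ZMod p))) + C X - C (C c))) Cs.card :=
      tbnd_prod _ _ (fun c _ => tbnd_sub tbnd_xy (tbnd_CC c 1))
    rw [hCcard] at h2
    rw [hf]
    exact tbnd_mono (by omega) (tbnd_mul h1 h2)
  obtain ⟨q, r, hfqr, hrdeg, hq⟩ :=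
    exists_div_mod gA hgAmonic hgAdeg (by omega) f.natDegree f le_rfl hftb
  have hGA : gA.map (C : ZMod p →+* Polynomial (ZMod p)) = ∏ a ∈ A, (X - C (C a)) := by
    rw [hgA, Polynomial.map_prod]
    refine Finset.prod_congr rfl fun a _ => ?_
    rw [Polynomial.map_sub, Polynomial.map_X, Polynomial.map_C]
  have hGAeval : ∀ a ∈ A, ∀ b : ZMod p, ev a b (gA.map (C : ZMod p →+* Polynomial (ZMod p))) = 0 := by
    intro a ha b
    rw [hGA, map_prod]
    refine Finset.prod_eq_zero ha ?_
    rw [map_sub, ev_X, ev_CC, sub_self]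
  have hrvanish : ∀ a ∈ A, ∀ b ∈ B, ev a b r = 0 := by
    intro a ha b hb
    have h : (0 : ZMod p) = ev a b (gA.map (C : ZMod p →+* Polynomial (ZMod p))) * ev a b q
        + ev a b r := by
      rw [← hvanish a ha b hb, hfqr, map_add, map_mul]
    rw [hGAeval a ha b, zero_mul, zero_add] at h
    exact h.symm
  have hqtb : tbnd q (l - 1) := fun i j hij => hq i j (by omega)
  have hrtb : tbnd r (k + l) := by
    have hr_eq : r = f - gA.map (C : ZMod p →+* Polynomial (ZMod p)) * q := by
      rw [hfqr]; ring
    rw [hr_eq]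
    exact tbnd_sub hftb (tbnd_mono (by omega) (tbnd_mul (tbnd_map (le_of_eq hgAdeg)) hqtb))
  have hrnat : r.natDegree < m := by
    rcases eq_or_ne r 0 with rfl | hr0
    · rw [Polynomial.natDegree_zero]; omega
    · exact (Polynomial.natDegree_lt_iff_degree_lt hr0).mpr hrdeg
  set gB : Polynomial (ZMod p) := ∏ b ∈ B, (X - C b) with hgB
  have hgBmonic : gB.Monic :=
    Polynomial.monic_prod_of_monic _ _ (fun b _ => Polynomial.monic_X_sub_C b)
  have hgBdeg : gB.natDegree = n := by
    rw [hgB, Polynomial.natDegree_prod_of_monic _ _ (fun b _ => Polynomial.monic_X_sub_C b)]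
    simp [Polynomial.natDegree_X_sub_C, hn]
  have hgBeval : ∀ b ∈ B, gB.eval b = 0 := by
    intro b hb
    rw [hgB, Polynomial.eval_prod]
    refine Finset.prod_eq_zero hb ?_
    rw [Polynomial.eval_sub, Polynomial.eval_X, Polynomial.eval_C, sub_self]
  set r' : Polynomial (Polynomial (ZMod p)) :=
    ∑ i ∈ Finset.range m, C (r.coeff i %ₘ gB) * X ^ i with hr'
  have hr'coeff : ∀ i, r'.coeff i = if i < m then r.coeff i %ₘ gB else 0 := by
    intro i
    rw [hr']
    exact coeff_sum_C_X _ m i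
  have hr'vanish : ∀ a ∈ A, ∀ b ∈ B, ev a b r' = 0 := by
    intro a ha b hb
    have hmod : ∀ i, (r.coeff i %ₘ gB).eval b = (r.coeff i).eval b := by
      intro i
      rw [Polynomial.modByMonic_eq_sub_mul_div _ gB, Polynomial.eval_sub,
        Polynomial.eval_mul, hgBeval b hb, zero_mul, sub_zero]
    have hevr' : ev a b r' = ∑ i ∈ Finset.range m, (r.coeff i).eval b * a ^ i := by
      rw [hr', map_sum]
      refine Finset.sum_congr rfl fun i _ => ?_
      rw [map_mul, map_pow, ev_C, ev_X, hmod]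
    have hevr : ev a b r = ∑ i ∈ Finset.range m, (r.coeff i).eval b * a ^ i := by
      have h0 : ev a b r = Polynomial.eval b (Polynomial.eval (Polynomial.C a) r) := rfl
      rw [h0, Polynomial.eval_eq_sum_range' hrnat, Polynomial.eval_finset_sum]
      refine Finset.sum_congr rfl fun i _ => ?_
      rw [Polynomial.eval_mul, Polynomial.eval_pow, Polynomial.eval_C]
    rw [hevr', ← hevr]
    exact hrvanish a ha b hb
  have hr'zero : ∀ b ∈ B, ∀ i, (r'.coeff i).eval b = 0 := by
    intro b hb i
    set sb := r'.map (Polynomial.evalRingHom b) with hsb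
    have hsbdeg : sb.natDegree < m := by
      have hle' : sb.natDegree ≤ m - 1 := by
        refine Polynomial.natDegree_le_iff_coeff_eq_zero.mpr fun M hM => ?_
        rw [hsb, Polynomial.coeff_map, hr'coeff, if_neg (by omega), map_zero]
      omega
    have hsbeval : ∀ a ∈ A, sb.eval a = 0 := by
      intro a ha
      rw [hsb, eval_map_eval]
      exact hr'vanish a ha b hb
    have hsb0 : sb = 0 :=
      Polynomial.eq_zero_of_natDegree_lt_card_of_eval_eq_zero' sb A hsbeval (by omega)
    have h := congrArg (fun t => Polynomial.coeff t i) hsb0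
    simpa [hsb, Polynomial.coeff_map] using h
  have hrk_deg : (r.coeff k).natDegree ≤ l :=
    Polynomial.natDegree_le_iff_coeff_eq_zero.mpr (fun M hM => hrtb k M (by omega))
  have hrkmod : r.coeff k %ₘ gB = r.coeff k := by
    rw [Polynomial.modByMonic_eq_self_iff hgBmonic]
    have h1 : (r.coeff k).degree ≤ (l : WithBot ℕ) := by
      refine Polynomial.degree_le_natDegree.trans ?_
      exact_mod_cast hrk_deg
    have h2 : gB.degree = (n : WithBot ℕ) := by
      rw [Polynomial.degree_eq_natDegree hgBmonic.ne_zero, hgBdeg]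
    rw [h2]
    exact lt_of_le_of_lt h1 (by exact_mod_cast (by omega : l < n))
  have hrk : r'.coeff k = r.coeff k := by
    rw [hr'coeff, if_pos (by omega), hrkmod]
  have hGAq : (((gA.map (C : ZMod p →+* Polynomial (ZMod p))) * q).coeff k).coeff l = 0 := by
    rw [Polynomial.coeff_mul, Polynomial.finset_sum_coeff]
    refine Finset.sum_eq_zero fun ij hij => ?_
    rw [Finset.HasAntidiagonal.mem_antidiagonal] at hij
    rw [Polynomial.coeff_mul]
    refine Finset.sum_eq_zero fun uv huv => ?_
    rw [Finset.HasAntidiagonal.mem_antidiagonal] at huv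
    rcases Nat.eq_zero_or_pos uv.1 with h0 | h0
    · rw [hq ij.2 uv.2 (by omega), mul_zero]
    · rw [Polynomial.coeff_map, Polynomial.coeff_C, if_neg (by omega), zero_mul]
  have hfk : (f.coeff k).coeff l = (r.coeff k).coeff l := by
    rw [hfqr, Polynomial.coeff_add, Polynomial.coeff_add, hGAq, zero_add]
  have hrk_natdeg : (r'.coeff k).natDegree < B.card := by
    rw [hrk]; omega
  have hcoef0 : r'.coeff k = 0 :=
    Polynomial.eq_zero_of_natDegree_lt_card_of_eval_eq_zero' _ B
      (fun b hb => hr'zero b hb k) hrk_natdeg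
  rw [hrk] at hcoef0
  exact hcoeff_ne (by rw [hfk, hcoef0, Polynomial.coeff_zero])

lemma S_mono {p : ℕ} {A' A B' B : Finset (ZMod p)} (hA : A' ⊆ A) (hB : B' ⊆ B) :
    (((A' ×ˢ B').filter (fun ab => ab.1 ≠ ab.2)).image (fun ab => ab.1 + ab.2)) ⊆
      (((A ×ˢ B).filter (fun ab => ab.1 ≠ ab.2)).image (fun ab => ab.1 + ab.2)) :=
  Finset.image_subset_image
    (Finset.filter_subset_filter _ (Finset.product_subset_product hA hB))

lemma S_singleton_left {p : ℕ} (a : ZMod p) (B' : Finset (ZMod p)) :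
    B'.card - 1 ≤
      ((({a} ×ˢ B').filter (fun ab => ab.1 ≠ ab.2)).image (fun ab => ab.1 + ab.2)).card := by
  have hsub : (B'.erase a).image (fun b => a + b) ⊆
      ((({a} ×ˢ B').filter (fun ab => ab.1 ≠ ab.2)).image (fun ab => ab.1 + ab.2)) := by
    intro x hx
    obtain ⟨b, hb, rfl⟩ := Finset.mem_image.mp hx
    refine Finset.mem_image.mpr ⟨(a, b), Finset.mem_filter.mpr ⟨?_, ?_⟩, rfl⟩
    · exact Finset.mem_product.mpr ⟨Finset.mem_singleton_self a, Finset.mem_of_mem_erase hb⟩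
    · exact fun h => (Finset.ne_of_mem_erase hb) h.symm
  calc B'.card - 1 ≤ (B'.erase a).card := Finset.pred_card_le_card_erase
    _ = ((B'.erase a).image (fun b => a + b)).card :=
        (Finset.card_image_of_injective _ (add_right_injective a)).symm
    _ ≤ _ := Finset.card_le_card hsub

lemma S_singleton_right {p : ℕ} (b : ZMod p) (A' : Finset (ZMod p)) :
    A'.card - 1 ≤
      (((A' ×ˢ {b}).filter (fun ab => ab.1 ≠ ab.2)).image (fun ab => ab.1 + ab.2)).card := by
  have hsub : (A'.erase b).image (fun a => a + b) ⊆
      (((A' ×ˢ {b}).filter (fun ab => ab.1 ≠ ab.2)).image (fun ab => ab.1 + ab.2)) := by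
    intro x hx
    obtain ⟨a, ha, rfl⟩ := Finset.mem_image.mp hx
    refine Finset.mem_image.mpr ⟨(a, b), Finset.mem_filter.mpr ⟨?_, ?_⟩, rfl⟩
    · exact Finset.mem_product.mpr ⟨Finset.mem_of_mem_erase ha, Finset.mem_singleton_self b⟩
    · exact fun h => (Finset.ne_of_mem_erase ha) h
  calc A'.card - 1 ≤ (A'.erase b).card := Finset.pred_card_le_card_erase
    _ = ((A'.erase b).image (fun a => a + b)).card :=
        (Finset.card_image_of_injective _ (add_left_injective b)).symm
    _ ≤ _ := Finset.card_le_card hsub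

lemma split (a b s : ℕ) (ha : 1 ≤ a) (hb : 1 ≤ b) (hs3 : 3 ≤ s) (hle : s ≤ a + b - 1) :
    ∃ a' b', 1 ≤ a' ∧ a' ≤ a ∧ 1 ≤ b' ∧ b' ≤ b ∧ a' + b' = s ∧ a' ≠ b' := by
  by_cases h : 2 * min a (s - 1) = s
  · exact ⟨a - 1, s - a + 1, by omega, by omega, by omega, by omega, by omega, by omega⟩
  · exact ⟨min a (s - 1), s - min a (s - 1), by omega, by omega, by omega, by omega,
      by omega, by omega⟩

end EH

theorem erdos_heilbronn (p : ℕ) (hp : p.Prime) (A B : Finset (ZMod p))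
    (hA : A.Nonempty) (hB : B.Nonempty) :
    min p (A.card + B.card - 3) ≤
      (((A ×ˢ B).filter (fun ab => ab.1 ≠ ab.2)).image
        (fun ab => ab.1 + ab.2)).card := by
  rcases Nat.eq_zero_or_pos (min p (A.card + B.card - 3)) with h0 | hpos
  · rw [h0]; exact Nat.zero_le _
  have ha1 : 1 ≤ A.card := Finset.card_pos.mpr hA
  have hb1 : 1 ≤ B.card := Finset.card_pos.mpr hB
  set t := min p (A.card + B.card - 3) with ht
  have htp : t ≤ p := min_le_left _ _
  have htab : t ≤ A.card + B.card - 3 := min_le_right _ _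
  obtain ⟨a', b', ha'1, ha'a, hb'1, hb'b, hsum, hne⟩ :=
    EH.split A.card B.card (t + 2) ha1 hb1 (by omega) (by omega)
  obtain ⟨A', hA'sub, hA'card⟩ := Finset.exists_subset_card_eq ha'a
  obtain ⟨B', hB'sub, hB'card⟩ := Finset.exists_subset_card_eq hb'b
  have hmono := Finset.card_le_card (EH.S_mono hA'sub hB'sub)
  have hmain : t ≤ (((A' ×ˢ B').filter (fun ab => ab.1 ≠ ab.2)).image
      (fun ab => ab.1 + ab.2)).card := by
    rcases eq_or_ne a' 1 with rfl | ha'ne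
    · obtain ⟨a0, rfl⟩ := Finset.card_eq_one.mp hA'card
      have := EH.S_singleton_left a0 B'
      omega
    rcases eq_or_ne b' 1 with rfl | hb'ne
    · obtain ⟨b0, rfl⟩ := Finset.card_eq_one.mp hB'card
      have := EH.S_singleton_right b0 A'
      omega
    have hcore := EH.core p hp A' B' (by omega) (by omega) (by omega) (by omega)
    omega
  omega
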